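/- Let a be a real number and h > 0 a real number. Then the 4×4 real symmetric matrix M with rows (4a²/h³, 2a²/h², −4a²/h³, 2a²/h²), (2a²/h², (a²+1)/h, −2a²/h², (a²−1)/h), (−4a²/h³, −2a²/h², 4a²/h³, −2a²/h²), (2a²/h², (a²−1)/h, −2a²/h², (a²+1)/h) is positive semidefinite, and if moreover a ≠ 0 then the leading 2×2 block [[4a²/h³, 2a²/h²], [2a²/h², (a²+1)/h]] is positive definite. -/

import Mathlib

open Matrix

theorem trapezoidal_hessian_posSemidef (a h : ℝ) (hh : 0 < h) :
    (!![4 * a ^ 2 / h ^ 3,    2 * a ^ 2 / h ^ 2, -(4 * a ^ 2 / h ^ 3), 2 * a ^ 2 / h ^ 2;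
        2 * a ^ 2 / h ^ 2,    (a ^ 2 + 1) / h,   -(2 * a ^ 2 / h ^ 2), (a ^ 2 - 1) / h;
        -(4 * a ^ 2 / h ^ 3), -(2 * a ^ 2 / h ^ 2), 4 * a ^ 2 / h ^ 3, -(2 * a ^ 2 / h ^ 2);
        2 * a ^ 2 / h ^ 2,    (a ^ 2 - 1) / h,   -(2 * a ^ 2 / h ^ 2), (a ^ 2 + 1) / h]
      : Matrix (Fin 4) (Fin 4) ℝ).PosSemidef ∧
    (a ≠ 0 →
      (!![4 * a ^ 2 / h ^ 3, 2 * a ^ 2 / h ^ 2;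
          2 * a ^ 2 / h ^ 2, (a ^ 2 + 1) / h] : Matrix (Fin 2) (Fin 2) ℝ).PosDef) := by
  have h3 : (0:ℝ) < h ^ 3 := by positivity
  constructor
  · rw [Matrix.posSemidef_iff_dotProduct_mulVec]
    constructor
    · unfold Matrix.IsHermitian
      ext i j
      fin_cases i <;> fin_cases j <;>
        simp [Matrix.conjTranspose, Matrix.transpose]
    · intro x
      simp only [Matrix.mulVec, dotProduct, Fin.sum_univ_four, star,
        Matrix.cons_val', Matrix.cons_val_zero, Matrix.cons_val_one, Matrix.head_cons,
        Matrix.empty_val', Matrix.cons_val_fin_one, Matrix.head_fin_const,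
        Matrix.cons_val_succ, Pi.star_apply, star_trivial, Matrix.of_apply, Matrix.cons_val_two, Matrix.cons_val_three, Matrix.tail_cons, id]
      have key : x 0 * (4 * a ^ 2 / h ^ 3 * x 0 + 2 * a ^ 2 / h ^ 2 * x 1 +
            -(4 * a ^ 2 / h ^ 3) * x 2 + 2 * a ^ 2 / h ^ 2 * x 3) +
          x 1 * (2 * a ^ 2 / h ^ 2 * x 0 + (a ^ 2 + 1) / h * x 1 +
            -(2 * a ^ 2 / h ^ 2) * x 2 + (a ^ 2 - 1) / h * x 3) +
          x 2 * (-(4 * a ^ 2 / h ^ 3) * x 0 + -(2 * a ^ 2 / h ^ 2) * x 1 +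
            4 * a ^ 2 / h ^ 3 * x 2 + -(2 * a ^ 2 / h ^ 2) * x 3) +
          x 3 * (2 * a ^ 2 / h ^ 2 * x 0 + (a ^ 2 - 1) / h * x 1 +
            -(2 * a ^ 2 / h ^ 2) * x 2 + (a ^ 2 + 1) / h * x 3)
          = (a ^ 2 / h ^ 3) * (2 * (x 0 - x 2) + h * (x 1 + x 3)) ^ 2
            + (1 / h) * (x 1 - x 3) ^ 2 := by
        field_simp
        ring
      rw [key]
      positivity
  · intro ha
    rw [Matrix.posDef_iff_dotProduct_mulVec]
    constructor
    · unfold Matrix.IsHermitian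
      ext i j
      fin_cases i <;> fin_cases j <;>
        simp [Matrix.conjTranspose, Matrix.transpose]
    · intro x hx
      simp only [Matrix.mulVec, dotProduct, Fin.sum_univ_two, star,
        Matrix.cons_val', Matrix.cons_val_zero, Matrix.cons_val_one, Matrix.head_cons,
        Matrix.empty_val', Matrix.cons_val_fin_one, Pi.star_apply, star_trivial, Matrix.of_apply, Matrix.tail_cons, Matrix.vecHead, id]
      have key : x 0 * (4 * a ^ 2 / h ^ 3 * x 0 + 2 * a ^ 2 / h ^ 2 * x 1) +
          x 1 * (2 * a ^ 2 / h ^ 2 * x 0 + (a ^ 2 + 1) / h * x 1)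
          = (a ^ 2 / h ^ 3) * (2 * x 0 + h * x 1) ^ 2 + (1 / h) * (x 1) ^ 2 := by
        field_simp
        ring
      rw [key]
      rcases ne_or_eq (x 1) 0 with h1 | h1
      · have t1 : 0 < (1 / h) * (x 1) ^ 2 := by positivity
        have t2 : 0 ≤ (a ^ 2 / h ^ 3) * (2 * x 0 + h * x 1) ^ 2 := by positivity
        linarith
      · have h0 : x 0 ≠ 0 := by
          intro h0
          apply hx
          funext i
          fin_cases i <;> simpa
        have e : 2 * x 0 + h * x 1 = 2 * x 0 := by rw [h1]; ring
        rw [e, h1]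
        have t1 : 0 < (a ^ 2 / h ^ 3) * (2 * x 0) ^ 2 := by positivity
        have t2 : (1 / h) * (0:ℝ) ^ 2 = 0 := by ring
        linarith
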